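/- Exact infimal convolution for support functions: Under the assumptions that Ω₁, Ω₂ are nonempty convex subsets of a normed space with Ω₂ bounded and 0 ∈ int(Ω₁ − Ω₂), for every x* with σ_{Ω₁ ∩ Ω₂}(x*) < ∞ there exist x₁*, x₂* ∈ X* with x₁* + x₂* = x* and σ_{Ω₁ ∩ Ω₂}(x*) = σ_{Ω₁}(x₁*) + σ_{Ω₂}(x₂*), i.e., the infimal convolution is attained. -/

import Mathlib

open Pointwise

theorem support_function_infconv_attained {X : Type*} [NormedAddCommGroup X]
    [NormedSpace ℝ X] (Ω₁ Ω₂ : Set X) (h₁ : Ω₁.Nonempty) (h₂ : Ω₂.Nonempty)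
    (hc₁ : Convex ℝ Ω₁) (hc₂ : Convex ℝ Ω₂) (hne : (Ω₁ ∩ Ω₂).Nonempty)
    (hbdd : Bornology.IsBounded Ω₂) (hqc : (0 : X) ∈ interior (Ω₁ - Ω₂))
    (f : X →L[ℝ] ℝ)
    (hfin : sSup ((fun x => (f x : EReal)) '' (Ω₁ ∩ Ω₂)) < ⊤) :
    ∃ f₁ f₂ : X →L[ℝ] ℝ, f₁ + f₂ = f ∧
      sSup ((fun x => (f x : EReal)) '' (Ω₁ ∩ Ω₂)) =
        sSup ((fun x => (f₁ x : EReal)) '' Ω₁) +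
          sSup ((fun x => (f₂ x : EReal)) '' Ω₂) := by
  classical
  obtain ⟨x₀, hx₀₁, hx₀₂⟩ := hne
  -- the set of values of `f` on the intersection
  set T : Set ℝ := f '' (Ω₁ ∩ Ω₂) with hT
  have hTim : (fun x => (f x : EReal)) '' (Ω₁ ∩ Ω₂) = ((↑) : ℝ → EReal) '' T := by
    rw [hT, ← Set.image_comp]; rfl
  have hTne : T.Nonempty := ⟨f x₀, ⟨x₀, ⟨hx₀₁, hx₀₂⟩, rfl⟩⟩
  have hfin' : sSup (((↑) : ℝ → EReal) '' T) < ⊤ := by rw [← hTim]; exact hfin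
  have hbot' : (f x₀ : EReal) ≤ sSup (((↑) : ℝ → EReal) '' T) :=
    le_sSup ⟨f x₀, ⟨x₀, ⟨hx₀₁, hx₀₂⟩, rfl⟩, rfl⟩
  have hAne_bot : sSup (((↑) : ℝ → EReal) '' T) ≠ ⊥ := by
    intro h; rw [h] at hbot'; exact (EReal.bot_lt_coe _).not_ge hbot'
  have hA : ((sSup (((↑) : ℝ → EReal) '' T)).toReal : EReal)
      = sSup (((↑) : ℝ → EReal) '' T) := EReal.coe_toReal hfin'.ne hAne_bot
  have hTbdd : BddAbove T := by
    refine ⟨(sSup (((↑) : ℝ → EReal) '' T)).toReal, fun t ht => ?_⟩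
    have h1 : (t : EReal) ≤ sSup (((↑) : ℝ → EReal) '' T) := le_sSup ⟨t, ht, rfl⟩
    rw [← hA] at h1
    exact EReal.coe_le_coe_iff.1 h1
  set s : ℝ := sSup T with hs_def
  have hsle : ∀ x ∈ Ω₁ ∩ Ω₂, f x ≤ s := fun x hx => le_csSup hTbdd ⟨x, hx, rfl⟩
  -- boundedness of Ω₂
  obtain ⟨M, hM⟩ : ∃ C, ∀ x ∈ Ω₂, ‖x‖ ≤ C := isBounded_iff_forall_norm_le.1 hbdd
  -- small ball inside Ω₂ - Ω₁
  have hset : Ω₂ - Ω₁ = -(Ω₁ - Ω₂) := by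
    ext z
    simp only [Set.mem_sub, Set.mem_neg]
    constructor
    · rintro ⟨a, ha, b, hb, rfl⟩; exact ⟨b, hb, a, ha, by abel⟩
    · rintro ⟨a, ha, b, hb, h⟩
      exact ⟨b, hb, a, ha, by rw [← neg_sub a b, h, neg_neg]⟩
  have h0' : (0 : X) ∈ interior (Ω₂ - Ω₁) := by
    rw [hset]
    have hsub : -(interior (Ω₁ - Ω₂)) ⊆ interior (-(Ω₁ - Ω₂)) :=
      interior_maximal (Set.neg_subset_neg.2 interior_subset) isOpen_interior.neg
    exact hsub (by simpa using hqc)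
  obtain ⟨δ, hδpos, hδ⟩ : ∃ δ > 0, Metric.ball (0 : X) δ ⊆ Ω₂ - Ω₁ := by
    rcases Metric.mem_nhds_iff.1 (mem_interior_iff_mem_nhds.1 h0') with ⟨δ, hδ0, hsub⟩
    exact ⟨δ, hδ0, hsub⟩
  -- the representation sets
  set R : X → Set ℝ := fun x =>
    {r | ∃ l : ℝ, 0 < l ∧ ∃ x₁ ∈ Ω₁, ∃ x₂ ∈ Ω₂, l • (x₂ - x₁) = x ∧ l * (s - f x₁) = r}
    with hRdef
  have hmem1 : ∀ x₁ ∈ Ω₁, ∀ x₂ ∈ Ω₂, (s - f x₁) ∈ R (x₂ - x₁) := by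
    intro x₁ hx1 x₂ hx2
    exact ⟨1, one_pos, x₁, hx1, x₂, hx2, one_smul _ _, one_mul _⟩
  set K : ℝ := |s| + ‖f‖ * M + ‖f‖ * δ with hKdef
  -- elements with controlled size
  have hRne' : ∀ (x : X) (l : ℝ), 0 < l → ‖l⁻¹ • x‖ < δ →
      ∃ r ∈ R x, r ≤ l * K := by
    intro x l hl hball
    obtain ⟨x₂, hx₂, x₁, hx₁, hv⟩ := hδ (by simpa [Metric.mem_ball] using hball)
    replace hv : x₂ - x₁ = l⁻¹ • x := hv
    have hrep : l • (x₂ - x₁) = x := by rw [hv]; exact smul_inv_smul₀ hl.ne' x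
    refine ⟨l * (s - f x₁), ⟨l, hl, x₁, hx₁, x₂, hx₂, hrep, rfl⟩, ?_⟩
    have h1 : |f x₂| ≤ ‖f‖ * M :=
      (f.le_opNorm x₂).trans (mul_le_mul_of_nonneg_left (hM x₂ hx₂) (norm_nonneg f))
    have h2 : |f (x₂ - x₁)| ≤ ‖f‖ * δ := by
      refine (f.le_opNorm (x₂ - x₁)).trans ?_
      rw [hv]
      exact mul_le_mul_of_nonneg_left hball.le (norm_nonneg f)
    have h3 : f (x₂ - x₁) = f x₂ - f x₁ := map_sub f x₂ x₁
    have habs : s ≤ |s| := le_abs_self s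
    have h4 : s - f x₁ ≤ K := by
      rw [hKdef]
      have := abs_le.1 h1
      have := abs_le.1 h2
      linarith
    exact mul_le_mul_of_nonneg_left h4 hl.le
  have hRnonempty : ∀ x : X, (R x).Nonempty := by
    intro x
    have hl : 0 < (‖x‖ + 1) / δ := by positivity
    have hball : ‖((‖x‖ + 1) / δ)⁻¹ • x‖ < δ := by
      rw [norm_smul, Real.norm_eq_abs, abs_of_pos (inv_pos.2 hl)]
      rw [inv_div]
      rw [div_mul_eq_mul_div, div_lt_iff₀ (by positivity)]
      nlinarith [norm_nonneg x]
    obtain ⟨r, hr, -⟩ := hRne' x _ hl hball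
    exact ⟨r, hr⟩
  -- additivity of representations
  have hcomb : ∀ x y r r', r ∈ R x → r' ∈ R y → r + r' ∈ R (x + y) := by
    rintro x y r r' ⟨l, hl, x₁, hx1, x₂, hx2, hxe, hre⟩ ⟨m, hm, y₁, hy1, y₂, hy2, hye, hr'e⟩
    have hlm : 0 < l + m := by linarith
    have ha0 : (0:ℝ) ≤ l / (l + m) := by positivity
    have hb0 : (0:ℝ) ≤ m / (l + m) := by positivity
    have hab : l / (l + m) + m / (l + m) = 1 := by field_simp
    refine ⟨l + m, hlm, (l/(l+m)) • x₁ + (m/(l+m)) • y₁, hc₁ hx1 hy1 ha0 hb0 hab,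
      (l/(l+m)) • x₂ + (m/(l+m)) • y₂, hc₂ hx2 hy2 ha0 hb0 hab, ?_, ?_⟩
    · rw [← hxe, ← hye]
      match_scalars <;> field_simp <;> ring
    · rw [← hre, ← hr'e]
      have hf1 : f ((l/(l+m)) • x₁ + (m/(l+m)) • y₁)
          = (l/(l+m)) * f x₁ + (m/(l+m)) * f y₁ := by
        rw [map_add, map_smul, map_smul]; rfl
      rw [hf1]
      field_simp
      ring
  have hR0 : ∀ r ∈ R 0, 0 ≤ r := by
    rintro r ⟨l, hl, x₁, hx1, x₂, hx2, hxe, hre⟩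
    have h12 : x₂ = x₁ := by
      have := (smul_eq_zero.1 hxe).resolve_left hl.ne'
      have : x₂ - x₁ = 0 := this
      linear_combination (norm := abel) this
    have hx1mem : x₁ ∈ Ω₁ ∩ Ω₂ := ⟨hx1, h12 ▸ hx2⟩
    have := hsle x₁ hx1mem
    nlinarith
  have hRbdd : ∀ x : X, BddBelow (R x) := by
    intro x
    obtain ⟨r', hr'⟩ := hRnonempty (-x)
    refine ⟨-r', fun r hr => ?_⟩
    have h0 : r + r' ∈ R 0 := by
      have := hcomb x (-x) r r' hr hr'
      simpa using this
    have := hR0 _ h0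
    linarith
  -- the sublinear functional
  set N : X → ℝ := fun x => sInf (R x) with hNdef
  have hNle : ∀ x, ∀ r ∈ R x, N x ≤ r := fun x r hr => csInf_le (hRbdd x) hr
  have hNadd : ∀ x y, N (x + y) ≤ N x + N y := by
    intro x y
    have h1 : ∀ r' ∈ R y, N (x + y) ≤ N x + r' := by
      intro r' hr'
      have h2 : N (x + y) - r' ≤ N x := by
        refine le_csInf (hRnonempty x) (fun r hr => ?_)
        have := hNle _ _ (hcomb x y r r' hr hr')
        linarith
      linarith
    have h3 : N (x + y) - N x ≤ N y := by
      refine le_csInf (hRnonempty y) (fun r' hr' => ?_)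
      have := h1 r' hr'
      linarith
    linarith
  have hsc : ∀ (d : ℝ), 0 < d → ∀ z r, r ∈ R z → d * r ∈ R (d • z) := by
    rintro d hd z r ⟨l, hl, x₁, hx1, x₂, hx2, hze, hre⟩
    exact ⟨d * l, mul_pos hd hl, x₁, hx1, x₂, hx2, by rw [← hze, smul_smul],
      by rw [← hre]; ring⟩
  have hNhom : ∀ c : ℝ, 0 < c → ∀ x, N (c • x) = c * N x := by
    intro c hc x
    refine le_antisymm ?_ ?_
    · rw [← div_le_iff₀' hc]
      refine le_csInf (hRnonempty x) (fun r hr => ?_)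
      have := hNle _ _ (hsc c hc x r hr)
      rw [div_le_iff₀' hc]
      linarith [this]
    · refine le_csInf (hRnonempty (c • x)) (fun r hr => ?_)
      have hmem : c⁻¹ * r ∈ R x := by
        have := hsc c⁻¹ (inv_pos.2 hc) (c • x) r hr
        rwa [inv_smul_smul₀ hc.ne'] at this
      have := hNle _ _ hmem
      calc c * N x ≤ c * (c⁻¹ * r) := by nlinarith
        _ = r := by field_simp
  have hN0 : (0:ℝ) ≤ N 0 := le_csInf (hRnonempty 0) hR0
  -- Hahn–Banach
  obtain ⟨g, -, hg⟩ := exists_extension_of_le_sublinear ⟨⊥, 0⟩ N hNhom hNadd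
    (fun x => by
      have hx : (x : X) = 0 := (Submodule.mem_bot ℝ).1 x.2
      simpa [hx] using hN0)
  -- continuity of g
  have hgb : ∀ x : X, g x ≤ (2 * K / δ) * ‖x‖ := by
    intro x
    rcases eq_or_ne x 0 with rfl | hx
    · simp
    · have hnx : 0 < ‖x‖ := norm_pos_iff.2 hx
      have hl : 0 < 2 * ‖x‖ / δ := by positivity
      have hball : ‖(2 * ‖x‖ / δ)⁻¹ • x‖ < δ := by
        rw [norm_smul, Real.norm_eq_abs, abs_of_pos (inv_pos.2 hl)]
        rw [inv_div, div_mul_eq_mul_div, div_lt_iff₀ (by positivity)]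
        nlinarith
      obtain ⟨r, hrR, hrle⟩ := hRne' x _ hl hball
      calc g x ≤ N x := hg x
        _ ≤ r := hNle x r hrR
        _ ≤ (2 * ‖x‖ / δ) * K := hrle
        _ = (2 * K / δ) * ‖x‖ := by ring
  have hgnorm : ∀ x : X, ‖g x‖ ≤ (2 * K / δ) * ‖x‖ := by
    intro x
    rw [Real.norm_eq_abs, abs_le]
    constructor
    · have h := hgb (-x)
      rw [map_neg, norm_neg] at h
      linarith
    · exact hgb x
  set G : X →L[ℝ] ℝ := LinearMap.mkContinuous g (2 * K / δ) hgnorm with hGdef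
  have hGg : ∀ x, G x = g x := fun x => rfl
  -- key inequality
  have key : ∀ x₁ ∈ Ω₁, ∀ x₂ ∈ Ω₂, (f x₁ - G x₁) + G x₂ ≤ s := by
    intro x₁ hx1 x₂ hx2
    have h := (hg (x₂ - x₁)).trans (hNle _ _ (hmem1 x₁ hx1 x₂ hx2))
    rw [map_sub] at h
    rw [hGg x₁, hGg x₂]
    linarith
  refine ⟨f - G, G, by ext x; simp, ?_⟩
  -- the two real suprema
  set W₁ : Set ℝ := (fun x => (f - G) x) '' Ω₁ with hW1def
  set W₂ : Set ℝ := (fun x => G x) '' Ω₂ with hW2def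
  have hW1im : (fun x => (((f - G) x : ℝ) : EReal)) '' Ω₁ = ((↑) : ℝ → EReal) '' W₁ := by
    rw [hW1def, ← Set.image_comp]; rfl
  have hW2im : (fun x => ((G x : ℝ) : EReal)) '' Ω₂ = ((↑) : ℝ → EReal) '' W₂ := by
    rw [hW2def, ← Set.image_comp]; rfl
  have hW1ne : W₁.Nonempty := ⟨(f - G) x₀, ⟨x₀, hx₀₁, rfl⟩⟩
  have hW2ne : W₂.Nonempty := ⟨G x₀, ⟨x₀, hx₀₂, rfl⟩⟩
  have happ : ∀ x, (f - G) x = f x - G x := fun x => rfl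
  have hW1bdd : BddAbove W₁ := by
    refine ⟨s - G x₀, ?_⟩
    rintro r ⟨x₁, hx1, rfl⟩
    have h := key x₁ hx1 x₀ hx₀₂
    show (f - G) x₁ ≤ s - G x₀
    rw [happ]
    linarith
  have hW2bdd : BddAbove W₂ := by
    refine ⟨s - (f x₀ - G x₀), ?_⟩
    rintro r ⟨x₂, hx2, rfl⟩
    have := key x₀ hx₀₁ x₂ hx2
    linarith
  set b₁ : ℝ := sSup W₁ with hb1def
  set b₂ : ℝ := sSup W₂ with hb2def
  have hb2le : ∀ x₁ ∈ Ω₁, b₂ ≤ s - (f x₁ - G x₁) := by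
    intro x₁ hx1
    refine csSup_le hW2ne ?_
    rintro r ⟨x₂, hx2, rfl⟩
    have := key x₁ hx1 x₂ hx2
    linarith
  have hb1le : b₁ ≤ s - b₂ := by
    refine csSup_le hW1ne ?_
    rintro r ⟨x₁, hx1, rfl⟩
    have h := hb2le x₁ hx1
    show (f - G) x₁ ≤ s - b₂
    rw [happ]
    linarith
  have hge : s ≤ b₁ + b₂ := by
    refine csSup_le hTne ?_
    rintro r ⟨x, hx, rfl⟩
    have e1 : f x - G x ≤ b₁ := le_csSup hW1bdd ⟨x, hx.1, (happ x)⟩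
    have e2 : G x ≤ b₂ := le_csSup hW2bdd ⟨x, hx.2, rfl⟩
    linarith
  have hbeq : b₁ + b₂ = s := le_antisymm (by linarith) hge
  -- transfer to EReal
  have hmono : Monotone ((↑) : ℝ → EReal) := fun a b h => EReal.coe_le_coe_iff.2 h
  have e0 : sSup ((fun x => (f x : EReal)) '' (Ω₁ ∩ Ω₂)) = (s : EReal) := by
    rw [hTim]
    exact (hmono.map_csSup_of_continuousAt (continuous_coe_real_ereal.continuousAt)
      hTne hTbdd).symm
  have e1 : sSup ((fun x => (((f - G) x : ℝ) : EReal)) '' Ω₁) = (b₁ : EReal) := by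
    rw [hW1im]
    exact (hmono.map_csSup_of_continuousAt (continuous_coe_real_ereal.continuousAt)
      hW1ne hW1bdd).symm
  have e2 : sSup ((fun x => ((G x : ℝ) : EReal)) '' Ω₂) = (b₂ : EReal) := by
    rw [hW2im]
    exact (hmono.map_csSup_of_continuousAt (continuous_coe_real_ereal.continuousAt)
      hW2ne hW2bdd).symm
  rw [e0, e1, e2, ← EReal.coe_add, hbeq]
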